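/- Let E, I, ν be real numbers with ν + I ≥ 0. If −1/2 + e^{2E}·(1/2 + I) < 0, then e^{4E}·(ν + I)² < e^{2E}·(e^{E}·ν − sinh E)². In particular, if moreover ν = 1/2, then e^{4E}·(1/2 + I)² < 1/4. -/
import Mathlib


/-- If `Λ₋ = -1/2 + e^{2E}(1/2 + I) < 0` and `ν + I ≥ 0`, then the evolved
variance product `e^{4E}(ν + I)²` drops below `e^{2E}(e^E ν - sinh E)²`; in
particular for a pure input (`ν = 1/2`) it violates the uncertainty bound `1/4`. -/
theorem uncertainty_violation (E I ν : ℝ) (hν : 0 ≤ ν + I) :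
    (-(1/2 : ℝ) + Real.exp (2*E) * (1/2 + I) < 0 →
      Real.exp (4*E) * (ν + I) ^ 2 <
        Real.exp (2*E) * (Real.exp E * ν - Real.sinh E) ^ 2) ∧
    (-(1/2 : ℝ) + Real.exp (2*E) * (1/2 + I) < 0 → ν = 1/2 →
      Real.exp (4*E) * (1/2 + I) ^ 2 < 1/4) := by
  have hx : 0 < Real.exp E := Real.exp_pos E
  have h2 : Real.exp (2*E) = Real.exp E ^ 2 := by
    rw [two_mul, Real.exp_add, sq]
  have h4 : Real.exp (4*E) = Real.exp E ^ 4 := by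
    have : (4:ℝ)*E = E + E + E + E := by ring
    rw [this, Real.exp_add, Real.exp_add, Real.exp_add]; ring
  have hs : Real.sinh E = (Real.exp E - (Real.exp E)⁻¹) / 2 := by
    rw [Real.sinh_eq, Real.exp_neg]
  have hmain : ∀ h : -(1/2 : ℝ) + Real.exp (2*E) * (1/2 + I) < 0,
      Real.exp (4*E) * (ν + I) ^ 2 <
        Real.exp (2*E) * (Real.exp E * ν - Real.sinh E) ^ 2 := by
    intro h
    rw [h2, h4, hs] at *
    have hinv : Real.exp E * (Real.exp E)⁻¹ = 1 := mul_inv_cancel₀ hx.ne'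
    -- a < b with a = x²(ν+I) ≥ 0, b = x²ν + (1 - x²)/2
    have ha : 0 ≤ Real.exp E ^ 2 * (ν + I) := by positivity
    have hab : Real.exp E ^ 2 * (ν + I) <
        Real.exp E ^ 2 * ν + (1 - Real.exp E ^ 2) / 2 := by nlinarith
    have hb : (Real.exp E ^ 2 * (ν + I))^2 <
        (Real.exp E ^ 2 * ν + (1 - Real.exp E ^ 2) / 2)^2 := by
      nlinarith
    calc Real.exp E ^ 4 * (ν + I) ^ 2 = (Real.exp E ^ 2 * (ν + I))^2 := by ring
      _ < (Real.exp E ^ 2 * ν + (1 - Real.exp E ^ 2) / 2)^2 := hb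
      _ = Real.exp E ^ 2 * (Real.exp E * ν - (Real.exp E - (Real.exp E)⁻¹)/2) ^ 2 := by
          field_simp; ring
  refine ⟨hmain, fun h hν2 => ?_⟩
  have := hmain h
  rw [hν2] at this
  have hs : Real.sinh E = (Real.exp E - (Real.exp E)⁻¹) / 2 := by
    rw [Real.sinh_eq, Real.exp_neg]
  have hinv : Real.exp E * (Real.exp E)⁻¹ = 1 := mul_inv_cancel₀ hx.ne'
  have hr : Real.exp (2*E) * (Real.exp E * (1/2) - Real.sinh E) ^ 2 = 1/4 := by
    rw [h2, hs]; field_simp; ring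
  linarith [hr ▸ this]
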